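/- Let c, d, k, ℓ be positive integers. There exists a recolouring from F_c^(k) to F_d^(ℓ) if and only if k ≤ ⌈ℓ / ⌈c/d⌉⌉. -/

import Mathlib

lemma lt_ceilDiv_iff' {a b n : ℕ} (ha : 0 < a) : n < b ⌈/⌉ a ↔ a * n < b := by
  rw [← not_le, ← not_le, ceilDiv_le_iff_le_mul ha]

/-- `r : Fin c → Fin d` is a recolouring from the clique family `F_c^(k)` to `F_d^(ℓ)`:
every tuple `g : Fin ℓ → Fin c` on which `r ∘ g` is constant contains some colour
at least `k` times. -/
def IsRecolouring (c d k ℓ : ℕ) (r : Fin c → Fin d) : Prop :=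
  ∀ g : Fin ℓ → Fin c, (∃ j : Fin d, ∀ i, r (g i) = j) →
    ∃ a : Fin c, k ≤ (Finset.univ.filter fun i => g i = a).card

theorem recolouring_exists_iff (c d k ℓ : ℕ)
    (hc : 0 < c) (hd : 0 < d) (hk : 0 < k) (hl : 0 < ℓ) :
    (∃ r : Fin c → Fin d, IsRecolouring c d k ℓ r) ↔ k ≤ ℓ ⌈/⌉ (c ⌈/⌉ d) := by
  set q := c ⌈/⌉ d with hq
  have hq0 : 0 < q := by rw [hq, lt_ceilDiv_iff' hd]; simpa using hc
  constructor
  · rintro ⟨r, hr⟩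
    obtain ⟨j, -, hj⟩ := Finset.exists_lt_card_fiber_of_mul_lt_card_of_maps_to
      (f := r) (s := (Finset.univ : Finset (Fin c))) (t := Finset.univ)
      (fun a _ => Finset.mem_univ _) (by
        simp only [Finset.card_univ, Fintype.card_fin]
        have h1 : q - 1 < q := Nat.sub_lt hq0 one_pos
        rw [hq, lt_ceilDiv_iff' hd] at h1
        exact h1)
    set S := Finset.univ.filter fun x => r x = j with hS
    set m := S.card with hm
    have hmq : q ≤ m := Nat.le_of_pred_lt hj
    have hm0 : 0 < m := lt_of_lt_of_le hq0 hmq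
    let e := S.orderIsoOfFin hm.symm
    let g : Fin ℓ → Fin c := fun i => (e ⟨(i : ℕ) % m, Nat.mod_lt _ hm0⟩ : Fin c)
    obtain ⟨a, ha⟩ := hr g ⟨j, fun i => by
      have h2 := (e ⟨(i : ℕ) % m, Nat.mod_lt _ hm0⟩).2
      simp only [hS, Finset.mem_filter] at h2
      exact h2.2⟩
    have hcard : (Finset.univ.filter fun i => g i = a).card ≤ ℓ ⌈/⌉ m := by
      have h3 : (Finset.univ.filter fun i => g i = a).card ≤ (Finset.range (ℓ ⌈/⌉ m)).card := by
        refine Finset.card_le_card_of_injOn (fun i => (i : ℕ) / m) ?_ ?_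
        · intro i _
          simp only [Finset.mem_coe, Finset.mem_range]
          rw [lt_ceilDiv_iff' hm0]
          calc m * ((i : ℕ) / m) ≤ (i : ℕ) := Nat.mul_div_le _ _
            _ < ℓ := i.2
        · intro i hi i' hi' hdiv
          simp only [Finset.coe_filter, Set.mem_setOf_eq] at hi hi'
          have heq : e ⟨(i:ℕ) % m, Nat.mod_lt _ hm0⟩ = e ⟨(i':ℕ) % m, Nat.mod_lt _ hm0⟩ :=
            Subtype.ext (show (g i : Fin c) = g i' by rw [hi.2, hi'.2])
          have hmod : (i : ℕ) % m = (i' : ℕ) % m :=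
            congrArg Fin.val (e.injective heq)
          apply Fin.ext
          conv_lhs => rw [← Nat.div_add_mod (i:ℕ) m]
          conv_rhs => rw [← Nat.div_add_mod (i':ℕ) m]
          dsimp only at hdiv
          rw [hdiv, hmod]
      simpa using h3
    calc k ≤ ℓ ⌈/⌉ m := le_trans ha hcard
      _ ≤ ℓ ⌈/⌉ q := by
        rw [ceilDiv_le_iff_le_mul hm0]
        calc ℓ ≤ q * (ℓ ⌈/⌉ q) := le_smul_ceilDiv hq0
          _ ≤ m * (ℓ ⌈/⌉ q) := Nat.mul_le_mul_right _ hmq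
  · intro hkle
    refine ⟨fun i => ⟨(i : ℕ) / q, ?_⟩, ?_⟩
    · rw [Nat.div_lt_iff_lt_mul hq0]
      calc (i : ℕ) < c := i.2
        _ ≤ d * q := (ceilDiv_le_iff_le_mul hd).mp le_rfl
    · rintro g ⟨j, hj⟩
      set T := Finset.univ.filter fun x : Fin c => (x : ℕ) / q = (j : ℕ) with hT
      have hTcard : T.card ≤ q := by
        have h4 : T.card ≤ (Finset.range q).card := by
          refine Finset.card_le_card_of_injOn (fun x => (x : ℕ) % q) ?_ ?_
          · intro x _
            exact Finset.mem_range.2 (Nat.mod_lt _ hq0)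
          · intro x hx x' hx' hmod
            simp only [hT, Finset.coe_filter, Set.mem_setOf_eq] at hx hx'
            apply Fin.ext
            conv_lhs => rw [← Nat.div_add_mod (x:ℕ) q]
            conv_rhs => rw [← Nat.div_add_mod (x':ℕ) q]
            dsimp only at hmod
            rw [hx.2, hx'.2, hmod]
        simpa using h4
      obtain ⟨a, -, ha⟩ := Finset.exists_lt_card_fiber_of_mul_lt_card_of_maps_to
        (f := g) (s := (Finset.univ : Finset (Fin ℓ))) (t := T)
        (fun i _ => by
          simp only [hT, Finset.mem_filter, Finset.mem_univ, true_and]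
          exact congrArg Fin.val (hj i))
        (by
          simp only [Finset.card_univ, Fintype.card_fin]
          calc T.card * (k - 1) ≤ q * (k - 1) := Nat.mul_le_mul_right _ hTcard
            _ < ℓ := by
              rw [← lt_ceilDiv_iff' hq0]
              exact lt_of_lt_of_le (Nat.sub_lt hk one_pos) hkle)
      exact ⟨a, Nat.le_of_pred_lt ha⟩
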